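/- Under the monotonicity hypothesis aᵀQ^r m ≥ 0 for all r ≥ 0 with strict inequality for some r, the equation c = β · aᵀ(I - βQ)^{-1} m has at most one solution β ∈ [0,1). -/

import Mathlib

open Matrix

section Aux

attribute [local instance] Matrix.linftyOpNormedRing Matrix.linftyOpNormedAlgebra

lemma aux_hasSum {J : ℕ} (Q : Matrix (Fin J) (Fin J) ℝ)
    (hQ0 : ∀ i j, 0 ≤ Q i j) (hQ1 : ∀ i, ∑ j, Q i j = 1)
    (a m : Fin J → ℝ) {β : ℝ} (hβ : β ∈ Set.Ico (0 : ℝ) 1) :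
    HasSum (fun r : ℕ => β ^ (r + 1) * (a ⬝ᵥ (Q ^ r *ᵥ m)))
      (β * (a ⬝ᵥ ((1 - β • Q)⁻¹ *ᵥ m))) := by
  obtain ⟨hβ0, hβ1⟩ := hβ
  haveI : CompleteSpace (Matrix (Fin J) (Fin J) ℝ) :=
    FiniteDimensional.complete ℝ _
  have hQnorm : ‖Q‖₊ ≤ 1 := by
    rw [Matrix.linfty_opNNNorm_def]
    refine Finset.sup_le fun i _ => ?_
    have : ∑ j, ‖Q i j‖ = 1 := by
      rw [← hQ1 i]
      exact Finset.sum_congr rfl fun j _ => abs_of_nonneg (hQ0 i j)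
    rw [← NNReal.coe_le_coe, NNReal.coe_sum, NNReal.coe_one]
    simpa [coe_nnnorm] using this.le
  have hnorm : ‖β • Q‖ < 1 := by
    calc ‖β • Q‖ ≤ ‖β‖ * ‖Q‖ := norm_smul_le _ _
    _ ≤ ‖β‖ * 1 := by
        refine mul_le_mul_of_nonneg_left ?_ (norm_nonneg _)
        exact_mod_cast hQnorm
    _ = |β| := by rw [mul_one]; rfl
    _ < 1 := by rwa [abs_of_nonneg hβ0]
  have hsum : HasSum (fun r : ℕ => (β • Q) ^ r) ((1 - β • Q)⁻¹) := by
    rw [Matrix.nonsing_inv_eq_ringInverse]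
    exact hasSum_geom_series_inverse _ hnorm
  let L : Matrix (Fin J) (Fin J) ℝ →ₗ[ℝ] ℝ :=
    { toFun := fun A => a ⬝ᵥ (A *ᵥ m)
      map_add' := fun A B => by simp [Matrix.add_mulVec, dotProduct_add]
      map_smul' := fun c A => by
        simp [Matrix.smul_mulVec, dotProduct_smul, smul_eq_mul] }
  have hL : Continuous L := L.continuous_of_finiteDimensional
  have hsum2 : HasSum (fun r : ℕ => a ⬝ᵥ ((β • Q) ^ r *ᵥ m))
      (a ⬝ᵥ ((1 - β • Q)⁻¹ *ᵥ m)) := hsum.map L hL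
  have key : ∀ r : ℕ, a ⬝ᵥ ((β • Q) ^ r *ᵥ m) = β ^ r * (a ⬝ᵥ (Q ^ r *ᵥ m)) := by
    intro r
    rw [smul_pow, Matrix.smul_mulVec, dotProduct_smul, smul_eq_mul]
  rw [funext key] at hsum2
  have := hsum2.mul_left β
  convert this using 2 with r
  · rfl
  · ring

end Aux

theorem stmt_12 {J : ℕ} (Q : Matrix (Fin J) (Fin J) ℝ)
    (hQ0 : ∀ i j, 0 ≤ Q i j) (hQ1 : ∀ i, ∑ j, Q i j = 1)
    (a m : Fin J → ℝ) (c : ℝ)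
    (hnn : ∀ r : ℕ, 0 ≤ a ⬝ᵥ (Q ^ r *ᵥ m))
    (hpos : ∃ r : ℕ, 0 < a ⬝ᵥ (Q ^ r *ᵥ m)) :
    ∀ β₁ ∈ Set.Ico (0 : ℝ) 1, ∀ β₂ ∈ Set.Ico (0 : ℝ) 1,
      c = β₁ * (a ⬝ᵥ ((1 - β₁ • Q)⁻¹ *ᵥ m)) →
      c = β₂ * (a ⬝ᵥ ((1 - β₂ • Q)⁻¹ *ᵥ m)) → β₁ = β₂ := by
  obtain ⟨r₀, hr₀⟩ := hpos
  -- strict monotonicity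
  have mono : ∀ β γ : ℝ, β ∈ Set.Ico (0:ℝ) 1 → γ ∈ Set.Ico (0:ℝ) 1 → β < γ →
      β * (a ⬝ᵥ ((1 - β • Q)⁻¹ *ᵥ m)) < γ * (a ⬝ᵥ ((1 - γ • Q)⁻¹ *ᵥ m)) := by
    intro β γ hβ hγ hlt
    have h1 := aux_hasSum Q hQ0 hQ1 a m hβ
    have h2 := aux_hasSum Q hQ0 hQ1 a m hγ
    rw [← h1.tsum_eq, ← h2.tsum_eq]
    refine Summable.tsum_lt_tsum (i := r₀) ?_ ?_ h1.summable h2.summable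
    · intro r
      exact mul_le_mul_of_nonneg_right
        (pow_le_pow_left₀ hβ.1 hlt.le _) (hnn r)
    · exact mul_lt_mul_of_pos_right (pow_lt_pow_left₀ hlt hβ.1 (Nat.succ_ne_zero r₀)) hr₀
  intro β₁ hβ₁ β₂ hβ₂ h₁ h₂
  rcases lt_trichotomy β₁ β₂ with h | h | h
  · have := mono β₁ β₂ hβ₁ hβ₂ h
    rw [← h₁, ← h₂] at this
    exact absurd this (lt_irrefl c)
  · exact h
  · have := mono β₂ β₁ hβ₂ hβ₁ h
    rw [← h₁, ← h₂] at this
    exact absurd this (lt_irrefl c)
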